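/- Any solution g > 0 of the ODE g'(ρ) = -√(λ²ρ·g(ρ)/(1-λ²ρ)) on (0, 1/λ²) with boundary condition lim_{ρ→1/λ²} g(ρ) = 0 satisfies √(g(ρ)) = (1/(2λ²))(λ√ρ·√(1-λ²ρ) + arccos(λ√ρ)). Equivalently: the function h(ρ) = √(g(ρ)) satisfies h'(ρ) = -(1/2)√(λ²ρ/(1-λ²ρ)), and integration gives the stated formula. -/

import Mathlib

open Real Set Filter

noncomputable def phi (lam : ℝ) (ρ : ℝ) : ℝ :=
  (1 / (2 * lam ^ 2)) * (lam * Real.sqrt ρ * Real.sqrt (1 - lam ^ 2 * ρ)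
    + Real.arccos (lam * Real.sqrt ρ))

lemma phi_hasDerivAt (lam x : ℝ) (hlam : 0 < lam) (hx : x ∈ Set.Ioo 0 (1 / lam ^ 2)) :
    HasDerivAt (phi lam) (-(lam * Real.sqrt x) / (2 * Real.sqrt (1 - lam ^ 2 * x))) x := by
  obtain ⟨hx0, hx1⟩ := hx
  have hlam2 : (0:ℝ) < lam ^ 2 := by positivity
  have hlt : lam ^ 2 * x < 1 := by
    rw [← lt_div_iff₀' hlam2] at *; linarith [hx1]
  set a := Real.sqrt x with ha
  set b := Real.sqrt (1 - lam ^ 2 * x) with hb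
  have ha0 : 0 < a := Real.sqrt_pos.mpr hx0
  have hb0 : 0 < b := Real.sqrt_pos.mpr (by linarith)
  have ha2 : a ^ 2 = x := Real.sq_sqrt hx0.le
  have hb2 : b ^ 2 = 1 - lam ^ 2 * x := Real.sq_sqrt (by linarith)
  have hla : lam * a < 1 := by nlinarith
  have hla0 : 0 < lam * a := by positivity
  have s1 : HasDerivAt Real.sqrt (1 / (2 * a)) x := Real.hasDerivAt_sqrt (ne_of_gt hx0)
  have inner : HasDerivAt (fun ρ : ℝ => 1 - lam ^ 2 * ρ) (-(lam ^ 2)) x := by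
    simpa using ((hasDerivAt_id x).const_mul (lam ^ 2)).const_sub 1
  have s2 : HasDerivAt (fun ρ : ℝ => Real.sqrt (1 - lam ^ 2 * ρ))
      (1 / (2 * b) * -(lam ^ 2)) x :=
    (Real.hasDerivAt_sqrt (ne_of_gt (by linarith) : (1 - lam^2*x) ≠ 0)).comp x inner
  have s3 : HasDerivAt (fun ρ : ℝ => lam * Real.sqrt ρ) (lam * (1 / (2 * a))) x :=
    s1.const_mul lam
  have ac : HasDerivAt (fun ρ : ℝ => Real.arccos (lam * Real.sqrt ρ))
      (-(1 / Real.sqrt (1 - (lam * a) ^ 2)) * (lam * (1 / (2 * a)))) x :=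
    HasDerivAt.comp (h₂ := Real.arccos) (h := fun ρ : ℝ => lam * Real.sqrt ρ) x
      (Real.hasDerivAt_arccos (x := lam * a) (by linarith) (ne_of_lt hla)) s3
  have prod : HasDerivAt (fun ρ : ℝ => lam * Real.sqrt ρ * Real.sqrt (1 - lam ^ 2 * ρ))
      (lam * (1 / (2 * a)) * b + lam * a * (1 / (2 * b) * -(lam ^ 2))) x := s3.mul s2
  have total := ((prod.add ac).const_mul (1 / (2 * lam ^ 2)))
  refine total.congr_deriv ?_
  symm
  have hsb : Real.sqrt (1 - (lam * a) ^ 2) = b := by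
    rw [hb]; congr 1; nlinarith
  rw [hsb]
  field_simp
  linear_combination (-1) * hb2 + (-lam^2) * ha2

lemma phi_cont (lam : ℝ) : Continuous (phi lam) := by
  unfold phi
  exact continuous_const.mul (((continuous_const.mul Real.continuous_sqrt).mul
    (Real.continuous_sqrt.comp (continuous_const.sub (continuous_const.mul continuous_id)))).add
    (Real.continuous_arccos.comp (continuous_const.mul Real.continuous_sqrt)))

lemma phi_endpoint (lam : ℝ) (hlam : 0 < lam) : phi lam (1 / lam ^ 2) = 0 := by
  unfold phi
  have h1 : lam ^ 2 * (1 / lam ^ 2) = 1 := by field_simp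
  have h2 : (1:ℝ) - lam ^ 2 * (1 / lam ^ 2) = 0 := by rw [h1]; ring
  have h3 : lam * Real.sqrt (1 / lam ^ 2) = 1 := by
    rw [one_div, Real.sqrt_inv, Real.sqrt_sq hlam.le]
    field_simp
  rw [h2, h3, Real.sqrt_zero, Real.arccos_one]
  ring

theorem stmt_5 (lam : ℝ) (hlam : 0 < lam) (g : ℝ → ℝ)
    (hdiff : ∀ ρ ∈ Set.Ioo 0 (1 / lam ^ 2), DifferentiableAt ℝ g ρ)
    (hpos : ∀ ρ ∈ Set.Ioo 0 (1 / lam ^ 2), 0 < g ρ)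
    (hode : ∀ ρ ∈ Set.Ioo 0 (1 / lam ^ 2),
      deriv g ρ = - Real.sqrt (lam ^ 2 * ρ * g ρ / (1 - lam ^ 2 * ρ)))
    (hbc : Filter.Tendsto g (nhdsWithin (1 / lam ^ 2) (Set.Iio (1 / lam ^ 2)))
      (nhds 0)) :
    ∀ ρ ∈ Set.Ioo 0 (1 / lam ^ 2),
      Real.sqrt (g ρ) =
        (1 / (2 * lam ^ 2)) * (lam * Real.sqrt ρ * Real.sqrt (1 - lam ^ 2 * ρ)
          + Real.arccos (lam * Real.sqrt ρ)) := by
  set B := 1 / lam ^ 2 with hB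
  have hlam2 : (0:ℝ) < lam ^ 2 := by positivity
  set F : ℝ → ℝ := fun ρ => Real.sqrt (g ρ) - phi lam ρ with hF
  -- F has derivative 0 on Ioo 0 B
  have hFderiv : ∀ x ∈ Set.Ioo 0 B, HasDerivAt F 0 x := by
    intro x hx
    obtain ⟨hx0, hx1⟩ := hx
    have hlt : lam ^ 2 * x < 1 := by
      rw [hB] at hx1
      calc lam ^ 2 * x < lam ^ 2 * (1 / lam ^ 2) := by
            exact mul_lt_mul_of_pos_left hx1 hlam2
        _ = 1 := by field_simp
    have hgx : 0 < g x := hpos x ⟨hx0, hx1⟩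
    have hsg : 0 < Real.sqrt (g x) := Real.sqrt_pos.mpr hgx
    have hh : HasDerivAt (fun ρ => Real.sqrt (g ρ))
        (1 / (2 * Real.sqrt (g x)) * deriv g x) x :=
      (Real.hasDerivAt_sqrt (ne_of_gt hgx)).comp x (hdiff x ⟨hx0, hx1⟩).hasDerivAt
    have key : 1 / (2 * Real.sqrt (g x)) * deriv g x
        = -(lam * Real.sqrt x) / (2 * Real.sqrt (1 - lam ^ 2 * x)) := by
      rw [hode x ⟨hx0, hx1⟩]
      have e1 : Real.sqrt (lam ^ 2 * x * g x / (1 - lam ^ 2 * x))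
          = lam * Real.sqrt x * Real.sqrt (g x) / Real.sqrt (1 - lam ^ 2 * x) := by
        rw [Real.sqrt_div (by positivity), Real.sqrt_mul (by positivity),
          Real.sqrt_mul (sq_nonneg lam), Real.sqrt_sq hlam.le]
      rw [e1]
      have hb0 : 0 < Real.sqrt (1 - lam ^ 2 * x) := Real.sqrt_pos.mpr (by linarith)
      field_simp
    have := hh.sub (phi_hasDerivAt lam x hlam ⟨hx0, hx1⟩)
    rw [key] at this
    simp at this; exact this
  -- F is constant on Ioo 0 B : for x ≤ y in Ioo, F x = F y
  have hconst : ∀ x ∈ Set.Ioo 0 B, ∀ y ∈ Set.Ioo 0 B, x ≤ y → F y = F x := by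
    intro x hx y hy hxy
    have hsub : Set.Icc x y ⊆ Set.Ioo 0 B := fun t ht =>
      ⟨lt_of_lt_of_le hx.1 ht.1, lt_of_le_of_lt ht.2 hy.2⟩
    have hcont : ContinuousOn F (Set.Icc x y) := fun t ht =>
      ((hFderiv t (hsub ht)).continuousAt).continuousWithinAt
    have hd : ∀ t ∈ Set.Ico x y, HasDerivWithinAt F 0 (Set.Ici t) t := fun t ht =>
      (hFderiv t (hsub ⟨ht.1, ht.2.le⟩)).hasDerivWithinAt
    exact constant_of_has_deriv_right_zero hcont hd y ⟨hxy, le_refl y⟩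
  -- F tends to 0 at B from the left
  have hFtend : Filter.Tendsto F (nhdsWithin B (Set.Iio B)) (nhds 0) := by
    have t1 : Filter.Tendsto (fun ρ => Real.sqrt (g ρ)) (nhdsWithin B (Set.Iio B))
        (nhds 0) := by
      have := hbc.sqrt
      simpa using this
    have t2 : Filter.Tendsto (phi lam) (nhdsWithin B (Set.Iio B)) (nhds 0) := by
      have := ((phi_cont lam).tendsto B).mono_left (nhdsWithin_le_nhds (s := Set.Iio B))
      rwa [phi_endpoint lam hlam] at this
    simpa using t1.sub t2
  intro ρ hρ
  -- eventually F = F ρ on (ρ, B)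
  have hmem : Set.Ioo ρ B ∈ nhdsWithin B (Set.Iio B) :=
    Ioo_mem_nhdsLT_of_mem ⟨hρ.2, le_refl B⟩
  have hev : ∀ᶠ t in nhdsWithin B (Set.Iio B), F t = F ρ := by
    filter_upwards [hmem] with t ht
    exact hconst ρ hρ t ⟨lt_trans hρ.1 ht.1, ht.2⟩ ht.1.le
  have : Filter.Tendsto F (nhdsWithin B (Set.Iio B)) (nhds (F ρ)) :=
    tendsto_const_nhds.congr' (hev.mono fun t h => h.symm)
  have hne : (nhdsWithin B (Set.Iio B)).NeBot := by
    apply nhdsLT_neBot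
  have hF0 : F ρ = 0 := tendsto_nhds_unique this hFtend
  have : Real.sqrt (g ρ) = phi lam ρ := by
    have := hF0
    simp only [hF] at this
    linarith
  rw [this]; rfl
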